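/- Let p be an odd prime. The set 𝒢 is a universal Gröbner basis of the Hilbert ideal I_H: for every monomial order on R, the set 𝒢 generates I_H as an ideal and, for every nonzero f ∈ I_H, the leading monomial LM(f) is divisible by the leading monomial LM(g) of some g ∈ 𝒢. -/

import Mathlib

open MvPolynomial

noncomputable section

abbrev DVar (r s : ℕ) := (Fin r ⊕ Fin r) ⊕ (Fin s ⊕ Fin s)

def dswap {r s : ℕ} : DVar r s → DVar r s
  | .inl (.inl i) => .inl (.inr i)
  | .inl (.inr i) => .inl (.inl i)
  | .inr (.inl j) => .inr (.inr j)
  | .inr (.inr j) => .inr (.inl j)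

def sigmaMap (F : Type*) [Field F] (r s : ℕ) :
    MvPolynomial (DVar r s) F →ₐ[F] MvPolynomial (DVar r s) F :=
  MvPolynomial.rename dswap

def rhoCoeff {F : Type*} [Field F] {r s : ℕ} (lam : Fin r → F) : DVar r s → F
  | .inl (.inl i) => lam i
  | .inl (.inr i) => (lam i)⁻¹
  | .inr _ => 1

def rhoMap (F : Type*) [Field F] (r s : ℕ) (lam : Fin r → F) :
    MvPolynomial (DVar r s) F →ₐ[F] MvPolynomial (DVar r s) F :=
  MvPolynomial.aeval fun v => MvPolynomial.C (rhoCoeff lam v) * MvPolynomial.X v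


def HilbertIdeal (F : Type*) [Field F] (r s : ℕ) (lam : Fin r → F) :
    Ideal (MvPolynomial (DVar r s) F) :=
  Ideal.span {f | sigmaMap F r s f = f ∧ rhoMap F r s lam f = f ∧ constantCoeff f = 0}

def IsMonomial {σ F : Type*} [CommSemiring F] (f : MvPolynomial σ F) : Prop :=
  ∃ d : σ →₀ ℕ, f = monomial d 1

def GSet (F : Type*) [Field F] (r s p : ℕ) (lam : Fin r → F) :
    Set (MvPolynomial (DVar r s) F) :=
  {f | ∃ m, IsMonomial m ∧ rhoMap F r s lam m = m ∧ sigmaMap F r s m ≠ m ∧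
      m.totalDegree ≤ p ∧ f = m + sigmaMap F r s m} ∪
  {f | ∃ (m : MvPolynomial (DVar r s) F) (v : DVar r s), IsMonomial m ∧ rhoMap F r s lam m = m ∧ m.totalDegree ≤ p ∧
      X v ∣ m ∧ f = X v * m} ∪
  {f | (∃ i : Fin r, f = X (Sum.inl (Sum.inl i)) * X (Sum.inl (Sum.inr i))) ∨
       (∃ j : Fin s, f = X (Sum.inr (Sum.inl j)) * X (Sum.inr (Sum.inr j)))}

def lmExp {σ F : Type*} [CommSemiring F] (mo : MonomialOrder σ) (f : MvPolynomial σ F) :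
    σ →₀ ℕ :=
  mo.toSyn.symm (f.support.sup fun d => mo.toSyn d)

set_option linter.unusedSectionVars false

namespace UGB

open Finsupp

variable {F : Type*} [Field F] {r s : ℕ}

lemma dswap_dswap (v : DVar r s) : dswap (dswap v) = v := by
  rcases v with (i|i)|(j|j) <;> rfl

lemma dswap_ne (v : DVar r s) : dswap v ≠ v := by
  rcases v with (i|i)|(j|j) <;> simp [dswap]

lemma dswap_inj {v w : DVar r s} (h : dswap v = dswap w) : v = w := by
  have := congrArg dswap h; rwa [dswap_dswap, dswap_dswap] at this

def dswapEquiv {r s : ℕ} : DVar r s ≃ DVar r s :=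
  ⟨dswap, dswap, dswap_dswap, dswap_dswap⟩

/-- swap on exponent vectors -/
def sw {r s : ℕ} (d : DVar r s →₀ ℕ) : DVar r s →₀ ℕ :=
  Finsupp.equivMapDomain dswapEquiv d

@[simp] lemma sw_apply (d : DVar r s →₀ ℕ) (v : DVar r s) : sw d v = d (dswap v) := by
  simp [sw, Finsupp.equivMapDomain_apply, dswapEquiv]

@[simp] lemma sw_sw (d : DVar r s →₀ ℕ) : sw (sw d) = d := by
  ext v; simp [dswap_dswap]

lemma sw_add (a b : DVar r s →₀ ℕ) : sw (a + b) = sw a + sw b := by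
  ext v; simp

@[simp] lemma sw_zero : sw (0 : DVar r s →₀ ℕ) = 0 := by ext v; simp

lemma sw_single (u : DVar r s) (n : ℕ) : sw (single u n) = single (dswap u) n := by
  ext v
  rcases eq_or_ne u (dswap v) with h | h
  · subst h; simp [dswap_dswap]
  · rw [sw_apply, single_eq_of_ne' h, single_eq_of_ne']
    intro hc; exact h (by rw [← hc, dswap_dswap])

lemma sw_le {a b : DVar r s →₀ ℕ} (h : a ≤ b) : sw a ≤ sw b := by
  intro v; simpa using h (dswap v)

lemma sw_eq_zero_iff {d : DVar r s →₀ ℕ} : sw d = 0 ↔ d = 0 := by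
  constructor
  · intro h; have := congrArg sw h; simpa using this
  · rintro rfl; simp

lemma sw_inj {a b : DVar r s →₀ ℕ} (h : sw a = sw b) : a = b := by
  have := congrArg sw h; simpa using this

/-- multiplicative weight of an exponent vector -/
def wt (lam : Fin r → F) (d : DVar r s →₀ ℕ) : F :=
  d.prod fun v k => rhoCoeff lam v ^ k

variable {lam : Fin r → F}

lemma wt_add (a b : DVar r s →₀ ℕ) : wt lam (a + b) = wt lam a * wt lam b := by
  unfold wt
  rw [Finsupp.prod_add_index]
  · intro v _; exact pow_zero _
  · intro v _ m n; exact pow_add _ _ _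

@[simp] lemma wt_zero : wt lam (0 : DVar r s →₀ ℕ) = 1 := by
  simp [wt]

lemma wt_single (v : DVar r s) (k : ℕ) : wt lam (single v k) = rhoCoeff lam v ^ k := by
  unfold wt
  exact Finsupp.prod_single_index (pow_zero _)

section hlam

variable {p : ℕ} (hp : 0 < p) (hlam : ∀ i, lam i ^ p = 1)
include hp hlam

lemma lam_ne_zero (i : Fin r) : lam i ≠ 0 := by
  intro h
  have := hlam i
  rw [h, zero_pow hp.ne'] at this
  exact zero_ne_one this

lemma rhoCoeff_ne_zero (v : DVar r s) : rhoCoeff lam v ≠ 0 := by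
  rcases v with (i|i)|(j|j)
  · exact lam_ne_zero hp hlam i
  · exact inv_ne_zero (lam_ne_zero hp hlam i)
  · exact one_ne_zero
  · exact one_ne_zero

lemma rhoCoeff_pow_p (v : DVar r s) : rhoCoeff lam v ^ p = 1 := by
  rcases v with (i|i)|(j|j)
  · exact hlam i
  · show ((lam i)⁻¹) ^ p = 1
    rw [inv_pow, hlam i, inv_one]
  · exact one_pow p
  · exact one_pow p

lemma rhoCoeff_mul_dswap (v : DVar r s) :
    rhoCoeff lam v * rhoCoeff lam (dswap v) = 1 := by
  rcases v with (i|i)|(j|j)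
  · exact mul_inv_cancel₀ (lam_ne_zero hp hlam i)
  · exact inv_mul_cancel₀ (lam_ne_zero hp hlam i)
  · exact mul_one 1
  · exact mul_one 1

lemma wt_ne_zero (d : DVar r s →₀ ℕ) : wt lam d ≠ 0 := by
  unfold wt Finsupp.prod
  rw [Finset.prod_ne_zero_iff]
  intro v _
  exact pow_ne_zero _ (rhoCoeff_ne_zero hp hlam v)

lemma wt_pow_p (d : DVar r s →₀ ℕ) : wt lam d ^ p = 1 := by
  unfold wt Finsupp.prod
  rw [← Finset.prod_pow]
  apply Finset.prod_eq_one
  intro v _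
  rw [← pow_mul, mul_comm, pow_mul, rhoCoeff_pow_p hp hlam, one_pow]

lemma wt_sw_mul (d : DVar r s →₀ ℕ) : wt lam (sw d) * wt lam d = 1 := by
  induction d using Finsupp.induction with
  | zero => simp
  | single_add a n f _ _ ih =>
    rw [sw_add, wt_add, wt_add, sw_single, wt_single, wt_single]
    calc rhoCoeff lam (dswap a) ^ n * wt lam (sw f) * (rhoCoeff lam a ^ n * wt lam f)
        = (rhoCoeff lam a * rhoCoeff lam (dswap a)) ^ n * (wt lam (sw f) * wt lam f) := by
          ring
      _ = 1 := by rw [rhoCoeff_mul_dswap hp hlam, one_pow, one_mul, ih]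

lemma wt_sw (d : DVar r s →₀ ℕ) (h : wt lam d = 1) : wt lam (sw d) = 1 := by
  have := wt_sw_mul hp hlam d
  rwa [h, mul_one] at this

end hlam

/-- degree of an exponent vector -/
def degE {r s : ℕ} (d : DVar r s →₀ ℕ) : ℕ := d.sum fun _ k => k

lemma degE_add (a b : DVar r s →₀ ℕ) : degE (a + b) = degE a + degE b := by
  unfold degE
  exact Finsupp.sum_add_index (by simp) (by simp)

@[simp] lemma degE_zero : degE (0 : DVar r s →₀ ℕ) = 0 := by simp [degE]

lemma degE_single (v : DVar r s) (k : ℕ) : degE (single v k) = k :=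
  Finsupp.sum_single_index rfl

lemma degE_sw (d : DVar r s →₀ ℕ) : degE (sw d) = degE d := by
  induction d using Finsupp.induction with
  | zero => simp
  | single_add a n f _ _ ih =>
    rw [sw_add, degE_add, degE_add, sw_single, degE_single, degE_single, ih]

lemma degE_eq_zero_iff (d : DVar r s →₀ ℕ) : degE d = 0 ↔ d = 0 := by
  constructor
  · intro h
    ext v
    simp only [Finsupp.coe_zero, Pi.zero_apply]
    by_contra hv
    have hm : v ∈ d.support := Finsupp.mem_support_iff.mpr hv
    have : d v ≤ degE d := by
      have h2 : d v ≤ ∑ w ∈ d.support, d w :=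
        Finset.single_le_sum (f := fun w => d w) (fun i _ => Nat.zero_le _) hm
      simpa [degE, Finsupp.sum] using h2
    omega
  · rintro rfl; simp

lemma degE_pos_of_mem_support {d : DVar r s →₀ ℕ} {v : DVar r s} (h : v ∈ d.support) :
    0 < degE d := by
  rcases Nat.eq_zero_or_pos (degE d) with h0 | h0
  · rw [degE_eq_zero_iff] at h0; subst h0; simp at h
  · exact h0

lemma le_degE_of_le {c d : DVar r s →₀ ℕ} (h : c ≤ d) : degE c ≤ degE d := by
  obtain ⟨e, rfl⟩ : ∃ e, d = c + e := ⟨d - c, (add_tsub_cancel_of_le h).symm⟩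
  rw [degE_add]; omega

lemma degE_tsub {c d : DVar r s →₀ ℕ} (h : c ≤ d) : degE (d - c) = degE d - degE c := by
  obtain ⟨e, rfl⟩ : ∃ e, d = c + e := ⟨d - c, (add_tsub_cancel_of_le h).symm⟩
  rw [add_tsub_cancel_left, degE_add]; omega


section Bridge

variable {lam : Fin r → F} {p : ℕ}

lemma sigmaMap_monomial (d : DVar r s →₀ ℕ) (c : F) :
    sigmaMap F r s (monomial d c) = monomial (sw d) c := by
  show MvPolynomial.rename dswap (monomial d c) = _
  rw [MvPolynomial.rename_monomial]
  congr 1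
  rw [sw, Finsupp.equivMapDomain_eq_mapDomain]
  rfl

lemma sigmaMap_sigmaMap (f : MvPolynomial (DVar r s) F) :
    sigmaMap F r s (sigmaMap F r s f) = f := by
  show (MvPolynomial.rename dswap) ((MvPolynomial.rename dswap) f) = f
  rw [MvPolynomial.rename_rename]
  have : (dswap ∘ dswap : DVar r s → DVar r s) = id := funext dswap_dswap
  rw [this, MvPolynomial.rename_id, AlgHom.id_apply]

lemma rhoMap_monomial (d : DVar r s →₀ ℕ) (c : F) :
    rhoMap F r s lam (monomial d c) = monomial d (wt lam d * c) := by
  show MvPolynomial.aeval _ (monomial d c) = _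
  rw [MvPolynomial.aeval_monomial]
  have h1 : (d.prod fun v e => (C (rhoCoeff lam v) * X v : MvPolynomial (DVar r s) F) ^ e)
      = C (wt lam d) * (d.prod fun v e => (X v : MvPolynomial (DVar r s) F) ^ e) := by
    show (∏ v ∈ d.support, (C (rhoCoeff lam v) * X v) ^ d v)
        = C (wt lam d) * ∏ v ∈ d.support, (X v) ^ d v
    have hw : C (wt lam d) = ∏ v ∈ d.support,
        (C (rhoCoeff lam v ^ d v) : MvPolynomial (DVar r s) F) := by
      rw [← map_prod]; rfl
    rw [hw, ← Finset.prod_mul_distrib]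
    apply Finset.prod_congr rfl
    intro v _
    rw [mul_pow, map_pow]
  rw [h1, ← MvPolynomial.monomial_eq]
  have : (algebraMap F (MvPolynomial (DVar r s) F)) c = C c := rfl
  rw [this, MvPolynomial.C_mul_monomial]
  congr 1
  ring

lemma rhoMap_monomial_one (d : DVar r s →₀ ℕ) :
    rhoMap F r s lam (monomial d (1 : F)) = monomial d (wt lam d) := by
  rw [rhoMap_monomial, mul_one]

lemma rhoMap_fixed_iff (d : DVar r s →₀ ℕ) :
    rhoMap F r s lam (monomial d (1 : F)) = monomial d 1 ↔ wt lam d = 1 := by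
  rw [rhoMap_monomial_one]
  constructor
  · intro h
    have := congrArg (MvPolynomial.coeff d) h
    simpa using this
  · intro h; rw [h]

lemma sigmaMap_fixed_iff (d : DVar r s →₀ ℕ) :
    sigmaMap F r s (monomial d (1 : F)) = monomial d 1 ↔ sw d = d := by
  rw [sigmaMap_monomial]
  constructor
  · intro h
    have h2 := congrArg (MvPolynomial.coeff d) h
    rw [MvPolynomial.coeff_monomial, MvPolynomial.coeff_monomial, if_pos rfl] at h2
    by_cases he : sw d = d
    · exact he
    · rw [if_neg he] at h2; exact absurd h2 zero_ne_one
  · intro h; rw [h]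

lemma totalDegree_monomial_one (d : DVar r s →₀ ℕ) :
    (monomial d (1 : F)).totalDegree = degE d := by
  rw [MvPolynomial.totalDegree_monomial _ (one_ne_zero : (1:F) ≠ 0)]
  rfl

lemma monomial_ne_zero' (d : DVar r s →₀ ℕ) : (monomial d (1 : F)) ≠ 0 := by
  intro h
  have := congrArg (MvPolynomial.coeff d) h
  simp at this

lemma charTwo_add_self (f : MvPolynomial (DVar r s) F) [CharP F 2] : f + f = 0 := by
  have h2 : (2 : F) = 0 := by
    have := CharP.cast_eq_zero F 2
    simpa using this
  have : f + f = (2 : F) • f := by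
    rw [two_smul]
  rw [this, h2, zero_smul]

lemma monomial_dvd_of_le {a b : DVar r s →₀ ℕ} (h : a ≤ b) :
    (monomial a (1:F)) ∣ (monomial b (1:F)) := by
  refine ⟨monomial (b - a) 1, ?_⟩
  rw [MvPolynomial.monomial_mul, one_mul, add_tsub_cancel_of_le h]

lemma X_mul_monomial_one (v : DVar r s) (d : DVar r s →₀ ℕ) :
    (X v : MvPolynomial (DVar r s) F) * monomial d 1 = monomial (single v 1 + d) 1 := by
  rw [MvPolynomial.X, MvPolynomial.monomial_mul, one_mul]

end Bridge

section Lm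

variable (mo : MonomialOrder (DVar r s))

lemma lmExp_mem_support {f : MvPolynomial (DVar r s) F} (hf : f ≠ 0) :
    lmExp mo f ∈ f.support := by
  obtain ⟨b, hb, he⟩ := Finset.exists_mem_eq_sup f.support
    (MvPolynomial.support_nonempty.mpr hf) (fun d => mo.toSyn d)
  unfold lmExp
  rw [he, AddEquiv.symm_apply_apply]
  exact hb

lemma le_lmExp {f : MvPolynomial (DVar r s) F} {d : DVar r s →₀ ℕ} (hd : d ∈ f.support) :
    mo.toSyn d ≤ mo.toSyn (lmExp mo f) := by
  unfold lmExp
  rw [AddEquiv.apply_symm_apply]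
  exact Finset.le_sup hd

lemma lmExp_monomial (d : DVar r s →₀ ℕ) :
    lmExp mo (monomial d (1:F)) = d := by
  classical
  unfold lmExp
  rw [MvPolynomial.support_monomial, if_neg (one_ne_zero : (1:F) ≠ 0)]
  simp

lemma coeff_pair_self {a b : DVar r s →₀ ℕ} (hab : a ≠ b) :
    MvPolynomial.coeff a ((monomial a (1:F)) + monomial b 1) = 1 := by
  rw [MvPolynomial.coeff_add, MvPolynomial.coeff_monomial, MvPolynomial.coeff_monomial,
    if_pos rfl, if_neg hab.symm, add_zero]

lemma pair_ne_zero {a b : DVar r s →₀ ℕ} (hab : a ≠ b) :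
    (monomial a (1:F)) + monomial b 1 ≠ 0 := by
  intro h0
  have := congrArg (MvPolynomial.coeff a) h0
  rw [coeff_pair_self hab] at this
  simp at this

lemma lmExp_pair {a b : DVar r s →₀ ℕ} (h : mo.toSyn b < mo.toSyn a) :
    lmExp mo ((monomial a (1:F)) + monomial b 1) = a := by
  classical
  have hab : a ≠ b := fun he => absurd (he ▸ h) (lt_irrefl _)
  have hne := pair_ne_zero (F := F) hab
  have hmem := lmExp_mem_support mo hne
  have hsub : ((monomial a (1:F)) + monomial b 1).support ⊆ {a, b} := by
    refine subset_trans MvPolynomial.support_add ?_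
    rw [MvPolynomial.support_monomial, MvPolynomial.support_monomial,
      if_neg (one_ne_zero : (1:F) ≠ 0), if_neg (one_ne_zero : (1:F) ≠ 0)]
    intro x hx
    rcases Finset.mem_union.mp hx with h1 | h1
    · exact Finset.mem_insert.mpr (Or.inl (Finset.mem_singleton.mp h1))
    · exact Finset.mem_insert.mpr (Or.inr h1)
  have hmem2 := hsub hmem
  rcases Finset.mem_insert.mp hmem2 with h1 | h1
  · exact h1
  · exfalso
    have h1' := Finset.mem_singleton.mp h1
    have hma : a ∈ ((monomial a (1:F)) + monomial b 1).support :=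
      MvPolynomial.mem_support_iff.mpr (by rw [coeff_pair_self hab]; exact one_ne_zero)
    have hle := le_lmExp mo hma
    rw [h1'] at hle
    exact absurd (lt_of_le_of_lt hle h) (lt_irrefl _)

end Lm


section Core

variable {lam : Fin r → F}

/-- exponent vectors of type (ii) generators -/
def G2e (lam : Fin r → F) (p : ℕ) : Set (DVar r s →₀ ℕ) :=
  {e | ∃ u m, wt lam m = 1 ∧ degE m ≤ p ∧ u ∈ m.support ∧ e = single u 1 + m}

/-- exponent vectors of type (iii) generators -/
def G3e (r s : ℕ) : Set (DVar r s →₀ ℕ) :=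
  {e | ∃ v : DVar r s, e = single v 1 + single (dswap v) 1}

/-- divisibility by some monomial generator -/
def D23 (lam : Fin r → F) (p : ℕ) (e : DVar r s →₀ ℕ) : Prop :=
  ∃ g, (g ∈ G2e lam p ∨ g ∈ G3e r s) ∧ g ≤ e

lemma D23_mono {p : ℕ} {e e' : DVar r s →₀ ℕ} (h : e ≤ e') (hd : D23 lam p e) :
    D23 lam p e' := by
  obtain ⟨g, hg, hge⟩ := hd
  exact ⟨g, hg, hge.trans h⟩

/-- an increasing chain of subvectors of m of all degrees up to i -/
lemma exists_chain (m : DVar r s →₀ ℕ) (i : ℕ) (hi : i ≤ degE m) :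
    ∃ c : ℕ → (DVar r s →₀ ℕ), (∀ j, j < i → c j ≤ c (j + 1)) ∧
      (∀ j, j ≤ i → c j ≤ m ∧ degE (c j) = j) := by
  induction i with
  | zero =>
    refine ⟨fun _ => 0, by omega, ?_⟩
    intro j hj
    interval_cases j
    simp
  | succ i ih =>
    obtain ⟨c, hmono, hprop⟩ := ih (by omega)
    obtain ⟨hci, hdi⟩ := hprop i le_rfl
    have hne : c i ≠ m := by
      intro h
      rw [h] at hdi
      omega
    have : ∃ v, c i v < m v := by
      by_contra hcon
      push_neg at hcon
      exact hne (le_antisymm hci (fun v => hcon v))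
    obtain ⟨v, hv⟩ := this
    refine ⟨fun j => if j ≤ i then c j else c i + single v 1, ?_, ?_⟩
    · intro j hj
      by_cases h1 : j ≤ i
      · by_cases h2 : j + 1 ≤ i
        · simp only [if_pos h1, if_pos h2]
          exact hmono j (by omega)
        · have h3 : j = i := by omega
          subst h3
          simp only [if_pos h1, if_neg h2]
          exact le_add_of_nonneg_right (by simp)
      · omega
    · intro j hj
      by_cases h1 : j ≤ i
      · simp only [if_pos h1]
        exact hprop j h1
      · have h3 : j = i + 1 := by omega
        subst h3
        simp only [if_neg h1]
        constructor
        · intro w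
          simp only [Finsupp.add_apply, Finsupp.single_apply]
          by_cases hw : v = w
          · subst hw
            rw [if_pos rfl]
            omega
          · rw [if_neg hw]
            have := hci w
            simpa using this
        · rw [degE_add, degE_single, hdi]

variable {P : ℕ} (hP : 0 < P) {ζ : F} (hζ : IsPrimitiveRoot ζ P) (hlam : ∀ i, lam i ^ P = 1)

include hP hζ hlam

/-- pigeonhole: every vector of degree > P has a weight-1 subvector of degree in [1,P] -/
lemma exists_subweight (m : DVar r s →₀ ℕ) (hdeg : P + 1 ≤ degE m) :
    ∃ c, c ≤ m ∧ wt lam c = 1 ∧ 1 ≤ degE c ∧ degE c ≤ P := by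
  obtain ⟨hmono, hprop⟩ := (exists_chain m P (by omega)).choose_spec
  set c := (exists_chain m P (by omega : P ≤ degE m)).choose with hc
  have hmonole : ∀ j k, j ≤ k → k ≤ P → c j ≤ c k := by
    intro j k hjk hkP
    obtain ⟨e, rfl⟩ := Nat.exists_eq_add_of_le hjk
    clear hjk
    induction e with
    | zero => exact le_rfl
    | succ e ihe =>
      have h1 : c j ≤ c (j + e) := ihe (by omega)
      have h2 : c (j + e) ≤ c (j + e + 1) := hmono _ (by omega)
      exact h1.trans (by rw [show j + (e + 1) = j + e + 1 by omega]; exact h2)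
  have key : ∀ jj kk : ℕ, jj < kk → kk ≤ P → wt lam (c jj) = wt lam (c kk) →
      ∃ cc, cc ≤ m ∧ wt lam cc = 1 ∧ 1 ≤ degE cc ∧ degE cc ≤ P := by
    intro jj kk hlt hkP hw
    have hle : c jj ≤ c kk := hmonole jj kk hlt.le hkP
    have hdk := (hprop kk hkP).2
    have hdj := (hprop jj (by omega)).2
    refine ⟨c kk - c jj, tsub_le_self.trans (hprop kk hkP).1, ?_, ?_, ?_⟩
    · have hadd : c jj + (c kk - c jj) = c kk := add_tsub_cancel_of_le hle
      have h2 := congrArg (wt lam) hadd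
      rw [wt_add, hw] at h2
      have := mul_left_cancel₀ (wt_ne_zero hP hlam (c kk)) (h2.trans (mul_one _).symm)
      exact this
    · rw [degE_tsub hle, hdk, hdj]; omega
    · rw [degE_tsub hle, hdk, hdj]; omega
  have hmaps : ∀ j : Fin (P + 1), wt lam (c j.val) ∈ Polynomial.nthRootsFinset P (1 : F) := by
    intro j
    rw [Polynomial.mem_nthRootsFinset hP]
    exact wt_pow_p hP hlam _
  have hcard : (Polynomial.nthRootsFinset P (1 : F)).card < (Finset.univ (α := Fin (P + 1))).card := by
    rw [hζ.card_nthRootsFinset, Finset.card_univ, Fintype.card_fin]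
    omega
  obtain ⟨j, -, k, -, hjk, heq⟩ :=
    Finset.exists_ne_map_eq_of_card_lt_of_maps_to hcard
      (f := fun j : Fin (P + 1) => wt lam (c j.val)) (fun j _ => hmaps j)
  rcases Nat.lt_or_ge j.val k.val with h | h
  · exact key j.val k.val h (by omega) heq
  · have h2 : k.val < j.val := by
      rcases Nat.lt_or_ge k.val j.val with h2 | h2
      · exact h2
      · exact absurd (Fin.ext (by omega)) hjk
    exact key k.val j.val h2 (by omega) heq.symm

/-- Lemma L: if u·m̂ divides M with m̂ of weight one and u ∈ supp m̂, then
M is divisible by an honest generator. -/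
lemma lemL {p : ℕ} (hpP : P ≤ p) :
    ∀ k (mh : DVar r s →₀ ℕ), degE mh ≤ k → wt lam mh = 1 →
      ∀ u ∈ mh.support, ∀ M : DVar r s →₀ ℕ, single u 1 + mh ≤ M → D23 lam p M := by
  intro k
  induction k with
  | zero =>
    intro mh hd hw u hu M hle
    exact ⟨single u 1 + mh, Or.inl ⟨u, mh, hw, by omega, hu, rfl⟩, hle⟩
  | succ k ih =>
    intro mh hd hw u hu M hle
    by_cases hdp : degE mh ≤ p
    · exact ⟨single u 1 + mh, Or.inl ⟨u, mh, hw, hdp, hu, rfl⟩, hle⟩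
    · have hdP : P + 1 ≤ degE mh := by omega
      obtain ⟨c, hcm, hwc, hc1, hcP⟩ := exists_subweight hP hζ hlam mh hdP
      by_cases hcase : ∃ w ∈ c.support, single w 1 + c ≤ single u 1 + mh
      · obtain ⟨w, hws, hwle⟩ := hcase
        exact ⟨single w 1 + c, Or.inl ⟨w, c, hwc, hcP.trans hpP, hws, rfl⟩, hwle.trans hle⟩
      · push_neg at hcase
        have hsat : ∀ w ∈ c.support, c w = mh w ∧ w ≠ u := by
          intro w hws
          by_contra hcon
          apply hcase w hws
          intro v
          simp only [Finsupp.add_apply, Finsupp.single_apply]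
          by_cases hvw : w = v
          · subst hvw
            by_cases hvu : u = w
            · subst hvu
              have := hcm u
              rw [if_pos rfl]
              omega
            · have h1 : c w ≠ mh w ∨ w = u := by tauto
              have h2 : c w ≠ mh w := by
                rcases h1 with h1 | h1
                · exact h1
                · exact absurd h1.symm hvu
              have := hcm w
              rw [if_pos rfl, if_neg hvu]
              omega
          · rw [if_neg hvw]
            have := hcm v
            by_cases hvu : u = v <;> simp [hvu] <;> omega
        have hcu : c u = 0 := by
          by_contra hcu
          have hus : u ∈ c.support := Finsupp.mem_support_iff.mpr hcu
          exact (hsat u hus).2 rfl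
        set mh2 := mh - c with hmh2
        have hle2 : c ≤ mh := hcm
        have hu2 : u ∈ mh2.support := by
          rw [Finsupp.mem_support_iff, hmh2, Finsupp.tsub_apply, hcu]
          have := Finsupp.mem_support_iff.mp hu
          omega
        have hw2 : wt lam mh2 = 1 := by
          have hadd : c + mh2 = mh := add_tsub_cancel_of_le hle2
          have h2 := congrArg (wt lam) hadd
          rw [wt_add, hwc, one_mul] at h2
          rw [h2, hw]
        have hd2 : degE mh2 ≤ k := by
          rw [hmh2, degE_tsub hle2]
          omega
        exact ih mh2 hd2 hw2 u hu2 M ((add_le_add_right tsub_le_self _).trans hle)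

end Core


section S2

variable {lam : Fin r → F} {P p : ℕ} (hP : 0 < P) {ζ : F} (hζ : IsPrimitiveRoot ζ P)
  (hlam : ∀ i, lam i ^ P = 1) (hpP : P ≤ p)

include hP hζ hlam hpP

/-- transfer of monomial-generator divisibility along the swap -/
lemma lemS2 (a n : DVar r s →₀ ℕ) (hwa : wt lam a = 1) (hda : degE a ≤ p)
    (h : D23 lam p (n + a)) : D23 lam p (n + sw a) := by
  obtain ⟨g, hg, hge⟩ := h
  have hge' : ∀ v, g v ≤ n v + a v := fun v => by
    have := hge v
    simpa using this
  rcases hg with hg | hg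
  · -- type (ii) generator
    obtain ⟨u, mt, hwmt, hdmt, humt, rfl⟩ := hg
    have H : ∀ v, (if u = v then 1 else 0) + mt v ≤ n v + a v := by
      intro v
      have := hge' v
      simpa [Finsupp.single_apply] using this
    have hmtu : 1 ≤ mt u := by
      have := Finsupp.mem_support_iff.mp humt
      omega
    set d := mt ⊓ a with hdd
    set b := mt - d with hbb
    set cc := a - d with hcco
    have hdv : ∀ v, d v = min (mt v) (a v) := by
      intro v
      rw [hdd, Finsupp.inf_apply]
    have hbv : ∀ v, b v = mt v - min (mt v) (a v) := by
      intro v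
      rw [hbb, Finsupp.tsub_apply, hdv]
    have hccv : ∀ v, cc v = a v - min (mt v) (a v) := by
      intro v
      rw [hcco, Finsupp.tsub_apply, hdv]
    have hble : ∀ v, b v ≤ n v := by
      intro v
      have h1 := H v
      have h2 := hbv v
      have h3 := hccv v
      omega
    have hwdb : wt lam d * wt lam b = 1 := by
      rw [← wt_add, add_tsub_cancel_of_le (inf_le_left : d ≤ mt), hwmt]
    have hwdc : wt lam d * wt lam cc = 1 := by
      rw [← wt_add, add_tsub_cancel_of_le (inf_le_right : d ≤ a), hwa]
    have hwbc : wt lam b = wt lam cc :=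
      mul_left_cancel₀ (wt_ne_zero hP hlam d) (hwdb.trans hwdc.symm)
    have hwm : wt lam (b + sw cc) = 1 := by
      rw [wt_add, hwbc, mul_comm]
      exact wt_sw_mul hP hlam cc
    by_cases hccu : 1 ≤ cc u
    · -- case α
      have hbu : b u = 0 := by
        have h2 := hbv u
        have h3 := hccv u
        omega
      have hdu : 1 ≤ d u := by
        have h2 := hdv u
        have h3 := hbv u
        omega
      apply lemL hP hζ hlam hpP (degE (b + sw cc)) (b + sw cc) le_rfl hwm (dswap u)
      · rw [Finsupp.mem_support_iff, Finsupp.add_apply, sw_apply, dswap_dswap]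
        omega
      · intro v
        simp only [Finsupp.add_apply, Finsupp.single_apply, sw_apply]
        have h1 := hble v
        have h2 := hccv (dswap v)
        have h3 := hdv (dswap v)
        by_cases hv : dswap u = v
        · have hv' : dswap v = u := by rw [← hv, dswap_dswap]
          rw [if_pos hv, hv']
          have h4 := hble (dswap u)
          have h5 := hccv u
          have h6 := hdv u
          rw [← hv]
          omega
        · rw [if_neg hv]
          omega
    · by_cases hbu : 1 ≤ b u
      · -- case γ
        have hnu : b u + 1 ≤ n u := by
          have h1 := H u
          rw [if_pos rfl] at h1
          have h2 := hbv u
          have h3 := hccv u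
          omega
        apply lemL hP hζ hlam hpP (degE (b + sw cc)) (b + sw cc) le_rfl hwm u
        · rw [Finsupp.mem_support_iff, Finsupp.add_apply, sw_apply]
          omega
        · intro v
          simp only [Finsupp.add_apply, Finsupp.single_apply, sw_apply]
          have h1 := hble v
          have h2 := hccv (dswap v)
          have h3 := hdv (dswap v)
          by_cases hv : u = v
          · subst hv
            rw [if_pos rfl]
            omega
          · rw [if_neg hv]
            omega
      · -- case β
        have hau : 1 ≤ a u := by
          have h2 := hbv u
          have h3 := hccv u
          omega
        have hnu : 1 ≤ n u := by
          have h1 := H u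
          rw [if_pos rfl] at h1
          have h2 := hbv u
          have h3 := hccv u
          omega
        refine ⟨single u 1 + single (dswap u) 1, Or.inr ⟨u, rfl⟩, ?_⟩
        intro v
        simp only [Finsupp.add_apply, Finsupp.single_apply, sw_apply]
        by_cases hv1 : u = v
        · subst hv1
          rw [if_pos rfl, if_neg (dswap_ne u)]
          omega
        · rw [if_neg hv1]
          by_cases hv2 : dswap u = v
          · rw [if_pos hv2, ← hv2, dswap_dswap]
            omega
          · rw [if_neg hv2]
            omega
  · -- type (iii) generator
    obtain ⟨v0, rfl⟩ := hg
    have Hv : ∀ v, (if v0 = v then 1 else 0) + (if dswap v0 = v then 1 else 0) ≤ n v + a v := by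
      intro v
      have := hge' v
      simpa [Finsupp.single_apply] using this
    have h1 : 1 ≤ n v0 + a v0 := by
      have := Hv v0
      rw [if_pos rfl, if_neg (dswap_ne v0)] at this
      omega
    have h2 : 1 ≤ n (dswap v0) + a (dswap v0) := by
      have := Hv (dswap v0)
      rw [if_pos rfl, if_neg (fun h : v0 = dswap v0 => (dswap_ne v0) h.symm)] at this
      omega
    by_cases ha1 : 1 ≤ a v0
    · by_cases ha2 : 1 ≤ a (dswap v0)
      · -- both in a : same (iii) generator divides n + sw a
        refine ⟨single v0 1 + single (dswap v0) 1, Or.inr ⟨v0, rfl⟩, ?_⟩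
        intro v
        simp only [Finsupp.add_apply, Finsupp.single_apply, sw_apply]
        by_cases hv1 : v0 = v
        · subst hv1
          rw [if_pos rfl, if_neg (dswap_ne v0)]
          omega
        · rw [if_neg hv1]
          by_cases hv2 : dswap v0 = v
          · rw [if_pos hv2, ← hv2, dswap_dswap]
            omega
          · rw [if_neg hv2]
            omega
      · -- a v0 ≥ 1, a (dswap v0) = 0 hence n (dswap v0) ≥ 1
        have hn2 : 1 ≤ n (dswap v0) := by omega
        refine ⟨single (dswap v0) 1 + sw a, Or.inl ⟨dswap v0, sw a,
          wt_sw hP hlam a hwa, by rw [degE_sw]; exact hda, ?_, rfl⟩, ?_⟩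
        · rw [Finsupp.mem_support_iff, sw_apply, dswap_dswap]
          omega
        · intro v
          simp only [Finsupp.add_apply, Finsupp.single_apply, sw_apply]
          by_cases hv : dswap v0 = v
          · rw [if_pos hv, ← hv, dswap_dswap]
            omega
          · rw [if_neg hv]
            omega
    · -- a v0 = 0, so n v0 ≥ 1
      have hn1 : 1 ≤ n v0 := by omega
      by_cases ha2 : 1 ≤ a (dswap v0)
      · refine ⟨single v0 1 + sw a, Or.inl ⟨v0, sw a,
          wt_sw hP hlam a hwa, by rw [degE_sw]; exact hda, ?_, rfl⟩, ?_⟩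
        · rw [Finsupp.mem_support_iff, sw_apply]
          omega
        · intro v
          simp only [Finsupp.add_apply, Finsupp.single_apply, sw_apply]
          by_cases hv : v0 = v
          · subst hv
            rw [if_pos rfl]
            omega
          · rw [if_neg hv]
            omega
      · have hn2 : 1 ≤ n (dswap v0) := by omega
        refine ⟨single v0 1 + single (dswap v0) 1, Or.inr ⟨v0, rfl⟩, ?_⟩
        intro v
        simp only [Finsupp.add_apply, Finsupp.single_apply, sw_apply]
        by_cases hv1 : v0 = v
        · subst hv1
          rw [if_pos rfl, if_neg (dswap_ne v0)]
          omega
        · rw [if_neg hv1]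
          by_cases hv2 : dswap v0 = v
          · rw [if_pos hv2, ← hv2, dswap_dswap]
            omega
          · rw [if_neg hv2]
            omega

end S2




section Spans

variable [CharP F 2] (mo : MonomialOrder (DVar r s)) (lam : Fin r → F) (p : ℕ)

/-- monomial multiples of monomial generators, as polynomials -/
def M23 : Set (MvPolynomial (DVar r s) F) :=
  {f | ∃ e, D23 lam p e ∧ f = monomial e 1}

/-- admissible pair data -/
def PairA (a : DVar r s →₀ ℕ) : Prop :=
  wt lam a = 1 ∧ degE a ≤ p ∧ sw a ≠ a

/-- oriented pair polynomials with top strictly below ν -/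
def PPlt (ν : mo.syn) : Set (MvPolynomial (DVar r s) F) :=
  {f | ∃ n a, PairA lam p a ∧ mo.toSyn (n + sw a) < mo.toSyn (n + a) ∧
    mo.toSyn (n + a) < ν ∧ f = monomial (n + a) 1 + monomial (n + sw a) 1}

/-- oriented pair polynomials with top at most ν -/
def PPle (ν : mo.syn) : Set (MvPolynomial (DVar r s) F) :=
  {f | ∃ n a, PairA lam p a ∧ mo.toSyn (n + sw a) < mo.toSyn (n + a) ∧
    mo.toSyn (n + a) ≤ ν ∧ f = monomial (n + a) 1 + monomial (n + sw a) 1}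

variable {mo lam p}

lemma charTwo_aab (x y z : MvPolynomial (DVar r s) F) : (x + y) + (y + z) = x + z := by
  have h := charTwo_add_self y
  linear_combination h

variable {P : ℕ} (hP : 0 < P) {ζ : F} (hζ : IsPrimitiveRoot ζ P)
  (hlam : ∀ i, lam i ^ P = 1) (hpP : P ≤ p)

include hP hlam

/-- an (unoriented) admissible pair polynomial with both monomials below ν
lies in the span -/
lemma pair_mem_span {c q : DVar r s →₀ ℕ} {ν : mo.syn}
    (hwc : wt lam c = 1) (hdc : degE c ≤ p)
    (h1 : mo.toSyn (q + c) < ν) (h2 : mo.toSyn (q + sw c) < ν) :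
    (monomial (q + c) 1 + monomial (q + sw c) 1 : MvPolynomial (DVar r s) F) ∈
      Submodule.span F (M23 lam p ∪ PPlt mo lam p ν) := by
  by_cases hsw : sw c = c
  · rw [hsw, charTwo_add_self]
    exact Submodule.zero_mem _
  · have hne : mo.toSyn (q + sw c) ≠ mo.toSyn (q + c) := by
      intro h
      exact hsw (add_left_cancel (mo.toSyn.injective h))
    rcases lt_or_gt_of_ne hne with hlt | hlt
    · apply Submodule.subset_span
      right
      exact ⟨q, c, ⟨hwc, hdc, hsw⟩, hlt, h1, rfl⟩
    · apply Submodule.subset_span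
      right
      refine ⟨q, sw c, ⟨wt_sw hP hlam c hwc, by rwa [degE_sw],
        fun h => hsw (by rw [sw_sw] at h; exact h.symm) ⟩, ?_, ?_, ?_⟩
      · rwa [sw_sw]
      · exact h2
      · rw [sw_sw, add_comm (monomial (q + c) 1)]

include hζ hpP

/-- the splitting lemma: a swap-pair of monomials with arbitrary weight-one center,
both below ν, lies in the span generated below ν -/
lemma split : ∀ k (mt : DVar r s →₀ ℕ), degE mt ≤ k → wt lam mt = 1 →
    ∀ (q : DVar r s →₀ ℕ) (ν : mo.syn), mo.toSyn (q + mt) < ν → mo.toSyn (q + sw mt) < ν →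
    (monomial (q + mt) 1 + monomial (q + sw mt) 1 : MvPolynomial (DVar r s) F) ∈
      Submodule.span F (M23 lam p ∪ PPlt mo lam p ν) := by
  intro k
  induction k with
  | zero =>
    intro mt hd hw q ν h1 h2
    exact pair_mem_span hP hlam hw (by omega) h1 h2
  | succ k ih =>
    intro mt hd hw q ν h1 h2
    by_cases hdp : degE mt ≤ p
    · exact pair_mem_span hP hlam hw hdp h1 h2
    · obtain ⟨c, hcle, hwc, hc1, hcP⟩ := exists_subweight hP hζ hlam mt (by omega)
      set dd := mt - c with hdd
      have hcd : c + dd = mt := add_tsub_cancel_of_le hcle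
      have hwd : wt lam dd = 1 := by
        have := congrArg (wt lam) hcd
        rw [wt_add, hwc, one_mul] at this
        rw [this, hw]
      have hddk : degE dd ≤ k := by
        rw [hdd, degE_tsub hcle]
        omega
      have hswmt : sw mt = sw c + sw dd := by
        rw [← hcd, sw_add]
      -- exponent identities
      have e1 : (q + dd) + c = q + mt := by
        rw [← hcd]; abel
      have e2 : (q + dd) + sw c = (q + sw c) + dd := by abel
      have e3 : (q + sw c) + sw dd = q + sw mt := by
        rw [hswmt]; abel
      have e4 : (q + sw dd) + sw c = q + sw mt := by
        rw [hswmt]; abel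
      have e5 : (q + sw dd) + c = (q + c) + sw dd := by abel
      have e6 : (q + c) + dd = q + mt := by
        rw [← hcd]; abel
      -- trichotomy
      have htri : mo.toSyn ((q + dd) + sw c) < ν ∨ mo.toSyn ((q + c) + sw dd) < ν := by
        by_contra hcon
        push_neg at hcon
        obtain ⟨hA, hB⟩ := hcon
        have hx : mo.toSyn ((q + dd) + c) < mo.toSyn ((q + dd) + sw c) := by
          rw [e1]; exact lt_of_lt_of_le h1 hA
        have hy : mo.toSyn ((q + sw c) + sw dd) < mo.toSyn ((q + c) + sw dd) := by
          rw [e3]; exact lt_of_lt_of_le h2 hB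
        simp only [map_add] at hx hy
        have hx' : mo.toSyn c < mo.toSyn (sw c) := lt_of_add_lt_add_left hx
        have hy' : mo.toSyn (sw c) < mo.toSyn c := by
          have := lt_of_add_lt_add_right hy
          exact lt_of_add_lt_add_left this
        exact absurd (hx'.trans hy') (lt_irrefl _)
      rcases htri with hA | hB
      · -- split with pair (q+dd, c) and recursion on dd with q + sw c
        have hid : (monomial (q + mt) 1 + monomial (q + sw mt) 1 : MvPolynomial (DVar r s) F)
            = (monomial ((q + dd) + c) 1 + monomial ((q + dd) + sw c) 1)
              + (monomial ((q + sw c) + dd) 1 + monomial ((q + sw c) + sw dd) 1) := by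
          rw [e2, e3, e1]
          exact (charTwo_aab _ _ _).symm
        rw [hid]
        apply Submodule.add_mem
        · apply pair_mem_span hP hlam hwc (hcP.trans hpP)
          · rw [e1]; exact h1
          · exact hA
        · apply ih dd hddk hwd
          · rw [← e2]; exact hA
          · rw [e3]; exact h2
      · -- symmetric split
        have hid : (monomial (q + mt) 1 + monomial (q + sw mt) 1 : MvPolynomial (DVar r s) F)
            = (monomial ((q + c) + dd) 1 + monomial ((q + c) + sw dd) 1)
              + (monomial ((q + sw dd) + c) 1 + monomial ((q + sw dd) + sw c) 1) := by
          rw [e5, e4, e6]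
          exact (charTwo_aab _ _ _).symm
        rw [hid]
        apply Submodule.add_mem
        · apply ih dd hddk hwd
          · rw [e6]; exact h1
          · exact hB
        · apply pair_mem_span hP hlam hwc (hcP.trans hpP)
          · rw [e5]; exact hB
          · rw [e4]; exact h2

end Spans


section Spair

variable [CharP F 2] {mo : MonomialOrder (DVar r s)} {lam : Fin r → F} {p : ℕ}
variable {P : ℕ} (hP : 0 < P) {ζ : F} (hζ : IsPrimitiveRoot ζ P)
  (hlam : ∀ i, lam i ^ P = 1) (hpP : P ≤ p)

include hP hζ hlam hpP

/-- S-pair reduction: the sum of two oriented pair polynomials with the same top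
lies in the span strictly below the top. -/
lemma spair {n a n' a' : DVar r s →₀ ℕ}
    (hwa : wt lam a = 1) (hwa' : wt lam a' = 1)
    (ho : mo.toSyn (n + sw a) < mo.toSyn (n + a))
    (ho' : mo.toSyn (n' + sw a') < mo.toSyn (n' + a'))
    (htop : n + a = n' + a') :
    ((monomial (n + a) 1 + monomial (n + sw a) 1)
      + (monomial (n' + a') 1 + monomial (n' + sw a') 1) : MvPolynomial (DVar r s) F) ∈
      Submodule.span F (M23 lam p ∪ PPlt mo lam p (mo.toSyn (n + a))) := by
  have hred : ((monomial (n + a) 1 + monomial (n + sw a) 1)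
      + (monomial (n' + a') 1 + monomial (n' + sw a') 1) : MvPolynomial (DVar r s) F)
      = monomial (n + sw a) 1 + monomial (n' + sw a') 1 := by
    rw [← htop, add_comm ((monomial (n + a)) 1 : MvPolynomial (DVar r s) F)]
    exact charTwo_aab _ _ _
  rw [hred]
  set t := a ⊓ a' with ht
  set al := a - t with hal
  set al' := a' - t with hal'
  set q := (n ⊓ n') + sw t with hq
  set mt := al' + sw al with hmt
  have htv : ∀ v, (n + a) v = (n' + a') v := fun v => by rw [htop]
  have hq1 : q + mt = n + sw a := by
    ext v
    have hv1 := htv v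
    simp only [Finsupp.add_apply] at hv1 ⊢
    simp only [hq, hmt, hal, hal', ht, Finsupp.add_apply, Finsupp.inf_apply,
      Finsupp.tsub_apply, sw_apply]
    omega
  have hq2 : q + sw mt = n' + sw a' := by
    ext v
    have hv1 := htv v
    simp only [Finsupp.add_apply] at hv1 ⊢
    simp only [hq, hmt, hal, hal', ht, sw_add, sw_sw, Finsupp.add_apply, Finsupp.inf_apply,
      Finsupp.tsub_apply, sw_apply, dswap_dswap]
    omega
  have h1w : wt lam t * wt lam al = 1 := by
    rw [← wt_add, add_tsub_cancel_of_le (inf_le_left : t ≤ a), hwa]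
  have h2w : wt lam t * wt lam al' = 1 := by
    rw [← wt_add, add_tsub_cancel_of_le (inf_le_right : t ≤ a'), hwa']
  have hww : wt lam al = wt lam al' :=
    mul_left_cancel₀ (wt_ne_zero hP hlam t) (h1w.trans h2w.symm)
  have hwmt : wt lam mt = 1 := by
    rw [hmt, wt_add, ← hww, mul_comm]
    exact wt_sw_mul hP hlam al
  have b1 : mo.toSyn (q + mt) < mo.toSyn (n + a) := by
    rw [hq1]; exact ho
  have b2 : mo.toSyn (q + sw mt) < mo.toSyn (n + a) := by
    rw [hq2, htop]; exact ho'
  have := split hP hζ hlam hpP (degE mt) mt le_rfl hwmt q (mo.toSyn (n + a)) b1 b2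
  rwa [hq1, hq2] at this

end Spair

section Supp

variable {S : Set (MvPolynomial (DVar r s) F)} {T : Set (DVar r s →₀ ℕ)}

/-- supports of elements of a span are controlled by supports of generators -/
lemma supp_span (hS : ∀ g ∈ S, ∀ e ∈ g.support, e ∈ T) :
    ∀ f ∈ Submodule.span F S, ∀ e ∈ f.support, e ∈ T := by
  intro f hf
  induction hf using Submodule.span_induction with
  | mem x hx => exact hS x hx
  | zero => intro e he; simp at he
  | add x y hx hy ihx ihy =>
    intro e he
    classical
    rcases Finset.mem_union.mp (MvPolynomial.support_add he) with h | h
    · exact ihx e h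
    · exact ihy e h
  | smul c x hx ihx =>
    intro e he
    exact ihx e (MvPolynomial.support_smul he)

end Supp


section Main

variable [CharP F 2] {mo : MonomialOrder (DVar r s)} {lam : Fin r → F} {p : ℕ}

/-- full divisibility predicate: divisible by a monomial generator or by an
oriented pair top -/
def Dfull (mo : MonomialOrder (DVar r s)) (lam : Fin r → F) (p : ℕ)
    (e : DVar r s →₀ ℕ) : Prop :=
  D23 lam p e ∨ ∃ a, wt lam a = 1 ∧ degE a ≤ p ∧ sw a ≠ a ∧
    mo.toSyn (sw a) < mo.toSyn a ∧ a ≤ e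

lemma support_pair {a b : DVar r s →₀ ℕ} (hab : a ≠ b) :
    ((monomial a (1:F)) + monomial b 1).support = {a, b} := by
  classical
  apply Finset.Subset.antisymm
  · refine subset_trans MvPolynomial.support_add ?_
    rw [MvPolynomial.support_monomial, MvPolynomial.support_monomial,
      if_neg (one_ne_zero : (1:F) ≠ 0), if_neg (one_ne_zero : (1:F) ≠ 0)]
    intro x hx
    rcases Finset.mem_union.mp hx with h | h
    · exact Finset.mem_insert.mpr (Or.inl (Finset.mem_singleton.mp h))
    · exact Finset.mem_insert.mpr (Or.inr h)
  · intro x hx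
    rcases Finset.mem_insert.mp hx with h | h
    · subst h
      exact MvPolynomial.mem_support_iff.mpr (by rw [coeff_pair_self hab]; exact one_ne_zero)
    · rw [Finset.mem_singleton] at h
      subst h
      refine MvPolynomial.mem_support_iff.mpr ?_
      rw [add_comm, coeff_pair_self (Ne.symm hab)]
      exact one_ne_zero

lemma supp_M23 {f : MvPolynomial (DVar r s) F}
    (hf : f ∈ Submodule.span F (M23 lam p)) {e : DVar r s →₀ ℕ} (he : e ∈ f.support) :
    D23 lam p e := by
  classical
  refine supp_span (T := {e | D23 lam p e}) ?_ f hf e he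
  rintro g ⟨e', hD, rfl⟩ e'' he''
  rw [MvPolynomial.support_monomial, if_neg (one_ne_zero : (1:F) ≠ 0)] at he''
  rw [Finset.mem_singleton] at he''
  subst he''
  exact hD

lemma supp_mixed {ν : mo.syn} {f : MvPolynomial (DVar r s) F}
    (hf : f ∈ Submodule.span F (M23 lam p ∪ PPlt mo lam p ν)) {e : DVar r s →₀ ℕ}
    (he : e ∈ f.support) : D23 lam p e ∨ mo.toSyn e < ν := by
  classical
  refine supp_span (T := {e | D23 lam p e ∨ mo.toSyn e < ν}) ?_ f hf e he
  rintro g (⟨e', hD, rfl⟩ | ⟨n, a, hpa, ho, htop, rfl⟩) e'' he''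
  · rw [MvPolynomial.support_monomial, if_neg (one_ne_zero : (1:F) ≠ 0),
      Finset.mem_singleton] at he''
    subst he''
    exact Or.inl hD
  · have hab : n + a ≠ n + sw a := by
      intro h
      rw [h] at ho
      exact absurd ho (lt_irrefl _)
    rw [support_pair hab] at he''
    rcases Finset.mem_insert.mp he'' with h | h
    · subst h; exact Or.inr htop
    · rw [Finset.mem_singleton] at h
      subst h
      exact Or.inr (ho.trans htop)

variable {P : ℕ} (hP : 0 < P) {ζ : F} (hζ : IsPrimitiveRoot ζ P)
  (hlam : ∀ i, lam i ^ P = 1) (hpP : P ≤ p)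

include hP hζ hlam hpP

/-- descend: from the strict span conclude via the inductive hypothesis -/
lemma from_lt {ν : mo.syn}
    (IH : ∀ ν', ν' < ν → ∀ f : MvPolynomial (DVar r s) F,
      f ∈ Submodule.span F (M23 lam p ∪ PPle mo lam p ν') → f ≠ 0 →
        Dfull mo lam p (lmExp mo f))
    (f : MvPolynomial (DVar r s) F) (hf : f ∈ Submodule.span F (M23 lam p ∪ PPlt mo lam p ν))
    (hf0 : f ≠ 0) : Dfull mo lam p (lmExp mo f) := by
  classical
  obtain ⟨T, hTsub, hTmem⟩ := Submodule.mem_span_finite_of_mem_span hf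
  set T' := T.filter (fun g => g ∉ M23 lam p) with hT'
  have hT'P : ∀ g ∈ T', g ∈ PPlt mo lam p ν := by
    intro g hg
    rw [hT', Finset.mem_filter] at hg
    rcases hTsub hg.1 with h | h
    · exact absurd h hg.2
    · exact h
  have hcover : (↑T : Set (MvPolynomial (DVar r s) F)) ⊆ M23 lam p ∪ ↑T' := by
    intro g hg
    by_cases hgM : g ∈ M23 lam p
    · exact Or.inl hgM
    · exact Or.inr (by rw [hT']; exact Finset.mem_coe.mpr (Finset.mem_filter.mpr ⟨hg, hgM⟩))
  have hf2 : f ∈ Submodule.span F (M23 lam p ∪ ↑T') :=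
    Submodule.span_mono hcover hTmem
  rcases Finset.eq_empty_or_nonempty T' with hemp | hne
  · rw [hemp] at hf2
    simp only [Finset.coe_empty, Set.union_empty] at hf2
    exact Or.inl (supp_M23 hf2 (lmExp_mem_support mo hf0))
  · have hbot : (⊥ : mo.syn) < ν := by
      obtain ⟨g, hg⟩ := hne
      obtain ⟨n, a, hpa, ho, htop, rfl⟩ := hT'P g hg
      exact lt_of_le_of_lt bot_le htop
    set μ := T'.sup (fun g => g.support.sup mo.toSyn) with hμ
    have hμν : μ < ν := by
      rw [hμ, Finset.sup_lt_iff hbot]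
      intro g hg
      obtain ⟨n, a, hpa, ho, htop, rfl⟩ := hT'P g hg
      rw [Finset.sup_lt_iff hbot]
      intro e he
      have hab : n + a ≠ n + sw a := fun h => absurd (h ▸ ho) (lt_irrefl _)
      rw [support_pair hab] at he
      rcases Finset.mem_insert.mp he with h | h
      · subst h; exact htop
      · rw [Finset.mem_singleton] at h; subst h; exact ho.trans htop
    have hsub : (↑T' : Set (MvPolynomial (DVar r s) F)) ⊆ PPle mo lam p μ := by
      intro g hg
      obtain ⟨n, a, hpa, ho, htop, hgeq⟩ := hT'P g (Finset.mem_coe.mp hg)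
      refine ⟨n, a, hpa, ho, ?_, hgeq⟩
      have hmem : n + a ∈ g.support := by
        rw [hgeq]
        have hab : n + a ≠ n + sw a := fun h => absurd (h ▸ ho) (lt_irrefl _)
        rw [support_pair hab]
        exact Finset.mem_insert_self _ _
      calc mo.toSyn (n + a) ≤ g.support.sup mo.toSyn := Finset.le_sup hmem
        _ ≤ μ := Finset.le_sup (f := fun g : MvPolynomial (DVar r s) F => g.support.sup mo.toSyn)
            (Finset.mem_coe.mp hg)
    have hf3 : f ∈ Submodule.span F (M23 lam p ∪ PPle mo lam p μ) :=
      Submodule.span_mono (Set.union_subset_union_right _ hsub) hf2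
    exact IH μ hμν f hf3 hf0

/-- the main well-founded induction -/
lemma main_ind : ∀ ν : mo.syn, ∀ f : MvPolynomial (DVar r s) F,
    f ∈ Submodule.span F (M23 lam p ∪ PPle mo lam p ν) → f ≠ 0 →
      Dfull mo lam p (lmExp mo f) := by
  intro ν
  induction ν using WellFoundedLT.induction with
  | _ ν IH =>
  intro f hf hf0
  set E := mo.toSyn.symm ν with hE
  have hEν : mo.toSyn E = ν := by rw [hE, AddEquiv.apply_symm_apply]
  by_cases hD : D23 lam p E
  · -- every top-ν pair is a sum of two monomial generators
    have hle : Submodule.span F (M23 lam p ∪ PPle mo lam p ν)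
        ≤ Submodule.span F (M23 lam p ∪ PPlt mo lam p ν) := by
      rw [Submodule.span_le]
      rintro g (hg | ⟨n, a, hpa, ho, htop, rfl⟩)
      · exact Submodule.subset_span (Or.inl hg)
      · rcases lt_or_eq_of_le htop with hlt | heq
        · exact Submodule.subset_span (Or.inr ⟨n, a, hpa, ho, hlt, rfl⟩)
        · have hEeq : n + a = E := by
            have := congrArg mo.toSyn.symm heq
            rw [AddEquiv.symm_apply_apply] at this
            exact this
          have hD1 : D23 lam p (n + a) := by rw [hEeq]; exact hD
          have hD2 : D23 lam p (n + sw a) :=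
            lemS2 hP hζ hlam hpP a n hpa.1 hpa.2.1 hD1
          exact Submodule.add_mem _
            (Submodule.subset_span (Or.inl ⟨n + a, hD1, rfl⟩))
            (Submodule.subset_span (Or.inl ⟨n + sw a, hD2, rfl⟩))
    exact from_lt hP hζ hlam hpP IH f (hle hf) hf0
  · by_cases hw0 : ∃ n0 a0 : DVar r s →₀ ℕ, PairA lam p a0 ∧
        mo.toSyn (n0 + sw a0) < mo.toSyn (n0 + a0) ∧ mo.toSyn (n0 + a0) = ν
    · obtain ⟨n0, a0, hpa0, ho0, htop0⟩ := hw0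
      set w0 : MvPolynomial (DVar r s) F :=
        monomial (n0 + a0) 1 + monomial (n0 + sw a0) 1 with hw0def
      have hsup : Submodule.span F (M23 lam p ∪ PPle mo lam p ν)
          ≤ Submodule.span F (M23 lam p ∪ PPlt mo lam p ν) ⊔ Submodule.span F {w0} := by
        rw [Submodule.span_le]
        rintro g (hg | ⟨n, a, hpa, ho, htop, rfl⟩)
        · exact Submodule.mem_sup_left (Submodule.subset_span (Or.inl hg))
        · rcases lt_or_eq_of_le htop with hlt | heq
          · exact Submodule.mem_sup_left (Submodule.subset_span (Or.inr ⟨n, a, hpa, ho, hlt, rfl⟩))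
          · have htops : n + a = n0 + a0 := by
              apply mo.toSyn.injective
              rw [heq, htop0]
            have hsp := spair (mo := mo) (p := p) hP hζ hlam hpP hpa.1 hpa0.1 ho ho0 htops
            have hg : (monomial (n + a) 1 + monomial (n + sw a) 1 : MvPolynomial (DVar r s) F)
                = ((monomial (n + a) 1 + monomial (n + sw a) 1) + w0) + w0 := by
              rw [add_assoc, charTwo_add_self, add_zero]
            rw [hg]
            apply Submodule.add_mem
            · apply Submodule.mem_sup_left
              rw [heq] at hsp
              exact hsp
            · exact Submodule.mem_sup_right (Submodule.subset_span rfl)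
      obtain ⟨y, hy, z, hz, hyz⟩ := Submodule.mem_sup.mp (hsup hf)
      obtain ⟨c, hc⟩ := Submodule.mem_span_singleton.mp hz
      by_cases hc0 : c = 0
      · have hfy : f = y := by rw [← hyz, ← hc, hc0, zero_smul, add_zero]
        rw [hfy]
        exact from_lt hP hζ hlam hpP IH y hy (hfy ▸ hf0)
      · have hE0 : E = n0 + a0 := by
          apply mo.toSyn.injective
          rw [hEν, htop0]
        have hab0 : n0 + a0 ≠ n0 + sw a0 := fun h => absurd (h ▸ ho0) (lt_irrefl _)
        have hcw0 : MvPolynomial.coeff E w0 = 1 := by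
          rw [hw0def, hE0]
          exact coeff_pair_self hab0
        have hcy : MvPolynomial.coeff E y = 0 := by
          by_contra hne
          have hmem : E ∈ y.support := MvPolynomial.mem_support_iff.mpr hne
          rcases supp_mixed hy hmem with h | h
          · exact hD h
          · rw [hEν] at h; exact absurd h (lt_irrefl _)
        have hcf : MvPolynomial.coeff E f = c := by
          rw [← hyz, ← hc, MvPolynomial.coeff_add, hcy, MvPolynomial.coeff_smul, hcw0,
            zero_add, smul_eq_mul, mul_one]
        have hEf : E ∈ f.support := MvPolynomial.mem_support_iff.mpr (by rw [hcf]; exact hc0)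
        have hlmge : ν ≤ mo.toSyn (lmExp mo f) := by
          rw [← hEν]
          exact le_lmExp mo hEf
        rcases eq_or_lt_of_le hlmge with heq | hlt
        · -- the leading monomial is the pair top
          have hlmE : lmExp mo f = E := by
            apply mo.toSyn.injective
            rw [hEν, ← heq]
          right
          refine ⟨a0, hpa0.1, hpa0.2.1, hpa0.2.2, ?_, ?_⟩
          · have := ho0
            simp only [map_add] at this
            exact lt_of_add_lt_add_left this
          · rw [hlmE, hE0]
            exact le_add_self
        · -- the leading monomial is above ν, hence comes from y, hence D23
          left
          have hlm_mem : lmExp mo f ∈ f.support := lmExp_mem_support mo hf0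
          have hfyz : f = y + c • w0 := by rw [← hyz, ← hc]
          have hsplit : lmExp mo f ∈ y.support ∪ (c • w0).support := by
            classical
            apply MvPolynomial.support_add
            rw [← hfyz]
            exact hlm_mem
          rcases Finset.mem_union.mp hsplit with h | h
          · rcases supp_mixed hy h with hD' | hlt'
            · exact hD'
            · exact absurd (hlt'.trans hlt) (lt_irrefl _)
          · exfalso
            have hsub : (c • w0).support ⊆ w0.support := MvPolynomial.support_smul
            have h2 := hsub h
            rw [hw0def, support_pair hab0] at h2
            have hle2 : mo.toSyn (lmExp mo f) ≤ ν := by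
              rcases Finset.mem_insert.mp h2 with h3 | h3
              · rw [h3, htop0]
              · rw [Finset.mem_singleton] at h3
                rw [h3, ← htop0]
                exact ho0.le
            exact absurd (lt_of_lt_of_le hlt hle2) (lt_irrefl _)
    · -- no pair has top exactly ν
      have hle : Submodule.span F (M23 lam p ∪ PPle mo lam p ν)
          ≤ Submodule.span F (M23 lam p ∪ PPlt mo lam p ν) := by
        rw [Submodule.span_le]
        rintro g (hg | ⟨n, a, hpa, ho, htop, rfl⟩)
        · exact Submodule.subset_span (Or.inl hg)
        · rcases lt_or_eq_of_le htop with hlt | heq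
          · exact Submodule.subset_span (Or.inr ⟨n, a, hpa, ho, hlt, rfl⟩)
          · exact absurd ⟨n, a, hpa, ho, heq⟩ hw0
      exact from_lt hP hζ hlam hpP IH f (hle hf) hf0

end Main


section Part1

variable [CharP F 2] {lam : Fin r → F} {p : ℕ} (hp : 0 < p) {ζ : F}
  (hζ : IsPrimitiveRoot ζ p) (hlam : ∀ i, lam i ^ p = 1)

/-- the generating set of the Hilbert ideal -/
def HGens (F : Type*) [Field F] (r s : ℕ) (lam : Fin r → F) :
    Set (MvPolynomial (DVar r s) F) :=
  {f | sigmaMap F r s f = f ∧ rhoMap F r s lam f = f ∧ constantCoeff f = 0}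

lemma constantCoeff_monomial_ne {d : DVar r s →₀ ℕ} (hd : d ≠ 0) :
    constantCoeff (monomial d (1:F)) = 0 := by
  classical
  rw [MvPolynomial.constantCoeff_monomial, if_neg hd]

lemma e0_sw (v : DVar r s) :
    sw (single v 1 + single (dswap v) 1) = single v 1 + single (dswap v) 1 := by
  rw [sw_add, sw_single, sw_single, dswap_dswap, add_comm]

lemma e0_ne (v : DVar r s) : (single v 1 + single (dswap v) 1 : DVar r s →₀ ℕ) ≠ 0 := by
  intro h
  have h2 : ((single v 1 + single (dswap v) 1 : DVar r s →₀ ℕ)) v = 0 := by rw [h]; rfl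
  simp [Finsupp.single_apply, dswap_ne v] at h2

include hp hlam

lemma pair_gen_mem {d : DVar r s →₀ ℕ} (hw : wt lam d = 1) (hsw : sw d ≠ d) :
    (monomial d 1 + monomial (sw d) 1 : MvPolynomial (DVar r s) F) ∈ HGens F r s lam := by
  have hd0 : d ≠ 0 := fun h => hsw (by rw [h]; simp)
  refine ⟨?_, ?_, ?_⟩
  · rw [map_add, sigmaMap_monomial, sigmaMap_monomial, sw_sw, add_comm]
  · rw [map_add, rhoMap_monomial_one, rhoMap_monomial_one, hw, wt_sw hp hlam d hw]
  · rw [map_add, constantCoeff_monomial_ne hd0,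
      constantCoeff_monomial_ne (fun h => hd0 (sw_eq_zero_iff.mp h)), add_zero]

lemma sym_gen_mem {d : DVar r s →₀ ℕ} (hw : wt lam d = 1) (hsw : sw d = d) (hd0 : d ≠ 0) :
    (monomial d 1 : MvPolynomial (DVar r s) F) ∈ HGens F r s lam := by
  refine ⟨?_, ?_, ?_⟩
  · rw [sigmaMap_monomial, hsw]
  · rw [rhoMap_monomial_one, hw]
  · exact constantCoeff_monomial_ne hd0

lemma e0_wt (v : DVar r s) : wt lam (single v 1 + single (dswap v) 1) = 1 := by
  rw [wt_add, wt_single, wt_single, pow_one, pow_one]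
  exact rhoCoeff_mul_dswap hp hlam v

lemma e0_gen_mem (v : DVar r s) :
    (monomial (single v 1 + single (dswap v) 1) 1 : MvPolynomial (DVar r s) F) ∈
      HGens F r s lam :=
  sym_gen_mem hp hlam (e0_wt hp hlam v) (e0_sw v) (e0_ne v)

omit hp hlam

lemma g3_mem (v : DVar r s) {p' : ℕ} :
    (X v * X (dswap v) : MvPolynomial (DVar r s) F) ∈ GSet F r s p' lam := by
  rcases v with (i|i)|(j|j)
  · exact Or.inr (Or.inl ⟨i, rfl⟩)
  · exact Or.inr (Or.inl ⟨i, mul_comm _ _⟩)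
  · exact Or.inr (Or.inr ⟨j, rfl⟩)
  · exact Or.inr (Or.inr ⟨j, mul_comm _ _⟩)

lemma XX_eq (v : DVar r s) :
    (X v * X (dswap v) : MvPolynomial (DVar r s) F)
      = monomial (single v 1 + single (dswap v) 1) 1 := by
  rw [show (X (dswap v) : MvPolynomial (DVar r s) F) = monomial (single (dswap v) 1) 1 from rfl,
    X_mul_monomial_one]

include hp hlam

/-- (a) the Gröbner generators lie in the Hilbert ideal -/
lemma gset_sub_hilbert : GSet F r s p lam ⊆ (HilbertIdeal F r s lam : Set (MvPolynomial (DVar r s) F)) := by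
  rintro g ((⟨m, ⟨d, rfl⟩, hrho, hsig, hdeg, rfl⟩ | ⟨m, v, ⟨d, rfl⟩, hrho, hdeg, hdvd, rfl⟩) | h3)
  · -- type (i)
    have hw : wt lam d = 1 := (rhoMap_fixed_iff d).mp hrho
    have hsw : sw d ≠ d := fun h => hsig ((sigmaMap_fixed_iff d).mpr h)
    rw [sigmaMap_monomial]
    exact Ideal.subset_span (pair_gen_mem hp hlam hw hsw)
  · -- type (ii)
    have hw : wt lam d = 1 := (rhoMap_fixed_iff d).mp hrho
    have hdv : d v ≠ 0 := by
      rcases (MvPolynomial.X_dvd_monomial).mp hdvd with h | h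
      · exact absurd h one_ne_zero
      · exact h
    by_cases hsw : sw d = d
    · exact Ideal.mul_mem_left _ _ (Ideal.subset_span (sym_gen_mem hp hlam hw hsw
        (fun h => hdv (by rw [h]; simp))))
    · have h1 : (X v : MvPolynomial (DVar r s) F) * (monomial d 1 + monomial (sw d) 1)
          ∈ HilbertIdeal F r s lam :=
        Ideal.mul_mem_left _ _ (Ideal.subset_span (pair_gen_mem hp hlam hw hsw))
      have hle : single (dswap v) 1 ≤ sw d := by
        intro w
        simp only [Finsupp.single_apply, sw_apply]
        by_cases hw' : dswap v = w
        · rw [if_pos hw', ← hw', dswap_dswap]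
          omega
        · rw [if_neg hw']
          omega
      have h2 : (X v : MvPolynomial (DVar r s) F) * monomial (sw d) 1
          ∈ HilbertIdeal F r s lam := by
        have heq : (X v : MvPolynomial (DVar r s) F) * monomial (sw d) 1
            = monomial (single v 1 + single (dswap v) 1) 1
              * monomial (sw d - single (dswap v) 1) 1 := by
          rw [X_mul_monomial_one, MvPolynomial.monomial_mul, one_mul]
          congr 1
          rw [add_assoc, add_tsub_cancel_of_le hle]
        rw [heq]
        exact Ideal.mul_mem_right _ _ (Ideal.subset_span (e0_gen_mem hp hlam v))
      have heq2 : (X v : MvPolynomial (DVar r s) F) * monomial d 1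
          = X v * (monomial d 1 + monomial (sw d) 1) - X v * monomial (sw d) 1 := by
        ring
      rw [heq2]
      exact Submodule.sub_mem _ h1 h2
  · rcases h3 with ⟨i, rfl⟩ | ⟨j, rfl⟩
    · have := XX_eq (F := F) (Sum.inl (Sum.inl i) : DVar r s)
      rw [show dswap (Sum.inl (Sum.inl i) : DVar r s) = Sum.inl (Sum.inr i) from rfl] at this
      rw [this]
      exact Ideal.subset_span (e0_gen_mem hp hlam (Sum.inl (Sum.inl i)))
    · have := XX_eq (F := F) (Sum.inr (Sum.inl j) : DVar r s)
      rw [show dswap (Sum.inr (Sum.inl j) : DVar r s) = Sum.inr (Sum.inr j) from rfl] at this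
      rw [this]
      exact Ideal.subset_span (e0_gen_mem hp hlam (Sum.inr (Sum.inl j)))

end Part1


section Part1b

variable [CharP F 2] {lam : Fin r → F} {p : ℕ} (hp : 0 < p) {ζ : F}
  (hζ : IsPrimitiveRoot ζ p) (hlam : ∀ i, lam i ^ p = 1)

lemma coeff_rhoMap (f : MvPolynomial (DVar r s) F) (d : DVar r s →₀ ℕ) :
    MvPolynomial.coeff d (rhoMap F r s lam f) = wt lam d * MvPolynomial.coeff d f := by
  classical
  conv_lhs => rw [f.as_sum]
  rw [map_sum]
  simp_rw [rhoMap_monomial]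
  rw [MvPolynomial.coeff_sum]
  simp_rw [MvPolynomial.coeff_monomial]
  rw [Finset.sum_ite_eq' f.support d (fun v => wt lam v * MvPolynomial.coeff v f)]
  by_cases hd : d ∈ f.support
  · rw [if_pos hd]
  · rw [if_neg hd, MvPolynomial.notMem_support_iff.mp hd, mul_zero]

lemma rho_fixed_wt {f : MvPolynomial (DVar r s) F} (hf : rhoMap F r s lam f = f) :
    ∀ d ∈ f.support, wt lam d = 1 := by
  intro d hd
  have h1 := coeff_rhoMap (lam := lam) f d
  rw [hf] at h1
  have h2 := MvPolynomial.mem_support_iff.mp hd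
  have h3 : wt lam d * MvPolynomial.coeff d f = 1 * MvPolynomial.coeff d f := by
    rw [one_mul, ← h1]
  exact mul_right_cancel₀ h2 h3

lemma sigma_coeff {f : MvPolynomial (DVar r s) F} (hf : sigmaMap F r s f = f)
    (d : DVar r s →₀ ℕ) : MvPolynomial.coeff (sw d) f = MvPolynomial.coeff d f := by
  have h1 : MvPolynomial.coeff (Finsupp.mapDomain dswap d) (MvPolynomial.rename dswap f)
      = MvPolynomial.coeff d f :=
    MvPolynomial.coeff_rename_mapDomain dswap (fun _ _ h => dswap_inj h) f d
  have h2 : Finsupp.mapDomain dswap d = sw d := by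
    rw [sw, Finsupp.equivMapDomain_eq_mapDomain]
    rfl
  rw [h2] at h1
  have hf' : (MvPolynomial.rename dswap) f = f := hf
  rw [hf'] at h1
  exact h1

include hp hζ hlam

/-- pairs of arbitrary degree lie in the span of the Gröbner generators -/
lemma pairP : ∀ k (d : DVar r s →₀ ℕ), degE d ≤ k → wt lam d = 1 →
    (monomial d 1 + monomial (sw d) 1 : MvPolynomial (DVar r s) F)
      ∈ Ideal.span (GSet F r s p lam) := by
  intro k
  induction k with
  | zero =>
    intro d hd hw
    have hd0 : d = 0 := (degE_eq_zero_iff d).mp (by omega)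
    subst hd0
    rw [sw_zero, charTwo_add_self]
    exact Ideal.zero_mem _
  | succ k ih =>
    intro d hd hw
    by_cases hsw : sw d = d
    · rw [hsw, charTwo_add_self]
      exact Ideal.zero_mem _
    · by_cases hdp : degE d ≤ p
      · apply Ideal.subset_span
        left; left
        refine ⟨monomial d 1, ⟨d, rfl⟩, (rhoMap_fixed_iff d).mpr hw,
          fun h => hsw ((sigmaMap_fixed_iff d).mp h), ?_, ?_⟩
        · rw [totalDegree_monomial_one]; exact hdp
        · rw [sigmaMap_monomial]
      · obtain ⟨c, hcle, hwc, hc1, hcP⟩ := exists_subweight hp hζ hlam d (by omega)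
        set dd := d - c with hdd
        have hcd : c + dd = d := add_tsub_cancel_of_le hcle
        have hwd : wt lam dd = 1 := by
          have := congrArg (wt lam) hcd
          rw [wt_add, hwc, one_mul] at this
          rw [this, hw]
        have hddk : degE dd ≤ k := by
          rw [hdd, degE_tsub hcle]
          omega
        have hck : degE c ≤ k := by omega
        have hswd : sw d = sw c + sw dd := by rw [← hcd, sw_add]
        have hid : (monomial d 1 + monomial (sw d) 1 : MvPolynomial (DVar r s) F)
            = monomial dd 1 * (monomial c 1 + monomial (sw c) 1)
              + monomial (sw c) 1 * (monomial dd 1 + monomial (sw dd) 1) := by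
          rw [mul_add, mul_add, MvPolynomial.monomial_mul, MvPolynomial.monomial_mul,
            MvPolynomial.monomial_mul, MvPolynomial.monomial_mul, one_mul]
          have e1 : dd + c = d := by rw [← hcd]; abel
          have e2 : dd + sw c = sw c + dd := by abel
          have e3 : sw c + sw dd = sw d := by rw [hswd]
          rw [e1, e2, e3]
          exact (charTwo_aab _ _ _).symm
        rw [hid]
        exact Ideal.add_mem _
          (Ideal.mul_mem_left _ _ (ih c hck hwc))
          (Ideal.mul_mem_left _ _ (ih dd hddk hwd))

omit hζ

/-- nonzero symmetric monomials lie in the span of the Gröbner generators -/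
lemma symP {d : DVar r s →₀ ℕ} (hsw : sw d = d) (hd0 : d ≠ 0) :
    (monomial d 1 : MvPolynomial (DVar r s) F) ∈ Ideal.span (GSet F r s p lam) := by
  have : ∃ v, d v ≠ 0 := by
    by_contra h
    push_neg at h
    exact hd0 (Finsupp.ext fun v => h v)
  obtain ⟨v, hv⟩ := this
  have hvd : d (dswap v) = d v := by
    have : sw d (dswap v) = d (dswap v) := by rw [hsw]
    rw [sw_apply, dswap_dswap] at this
    exact this.symm
  have hle : single v 1 + single (dswap v) 1 ≤ d := by
    intro w
    simp only [Finsupp.add_apply, Finsupp.single_apply]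
    by_cases h1 : v = w
    · subst h1
      rw [if_pos rfl, if_neg (dswap_ne v)]
      omega
    · rw [if_neg h1]
      by_cases h2 : dswap v = w
      · rw [if_pos h2, ← h2]
        omega
      · rw [if_neg h2]
        omega
  have heq : (monomial d 1 : MvPolynomial (DVar r s) F)
      = (X v * X (dswap v)) * monomial (d - (single v 1 + single (dswap v) 1)) 1 := by
    rw [XX_eq, MvPolynomial.monomial_mul, one_mul, add_tsub_cancel_of_le hle]
  rw [heq]
  exact Ideal.mul_mem_right _ _ (Ideal.subset_span (g3_mem v))

include hζ

/-- invariants lie in the span of the Gröbner generators -/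
lemma invP : ∀ (N : ℕ) (f : MvPolynomial (DVar r s) F), f.support.card ≤ N →
    sigmaMap F r s f = f → (∀ d ∈ f.support, wt lam d = 1) → constantCoeff f = 0 →
    f ∈ Ideal.span (GSet F r s p lam) := by
  intro N
  induction N with
  | zero =>
    intro f hcard _ _ _
    have : f.support = ∅ := Finset.card_eq_zero.mp (by omega)
    rw [MvPolynomial.support_eq_empty.mp this]
    exact Ideal.zero_mem _
  | succ N ih =>
    intro f hcard hsig hwt hcc
    rcases eq_or_ne f 0 with rfl | hf0
    · exact Ideal.zero_mem _
    · obtain ⟨d, hd⟩ := MvPolynomial.support_nonempty.mpr hf0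
      have hd0 : d ≠ 0 := by
        intro h
        subst h
        exact absurd hcc (MvPolynomial.mem_support_iff.mp hd)
      set cd := MvPolynomial.coeff d f with hcd
      have hcdne : cd ≠ 0 := MvPolynomial.mem_support_iff.mp hd
      by_cases hsw : sw d = d
      · -- symmetric monomial case
        set f' := f - cd • monomial d 1 with hf'
        have hcoeff : ∀ e, MvPolynomial.coeff e f'
            = MvPolynomial.coeff e f - (if d = e then cd else 0) := by
          intro e
          rw [hf', MvPolynomial.coeff_sub, MvPolynomial.coeff_smul,
            MvPolynomial.coeff_monomial]
          by_cases he : d = e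
          · rw [if_pos he, if_pos he, smul_eq_mul, mul_one]
          · rw [if_neg he, if_neg he, smul_eq_mul, mul_zero]
        have hsupp : f'.support ⊆ f.support.erase d := by
          intro e he
          have h1 := MvPolynomial.mem_support_iff.mp he
          rw [hcoeff] at h1
          by_cases hde : d = e
          · subst hde
            rw [if_pos rfl] at h1
            simp [hcd] at h1
          · rw [if_neg hde] at h1
            simp only [sub_zero] at h1
            exact Finset.mem_erase.mpr ⟨Ne.symm hde, MvPolynomial.mem_support_iff.mpr h1⟩
        have hcard' : f'.support.card ≤ N := by
          have h1 := Finset.card_le_card hsupp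
          have h2 : (f.support.erase d).card < f.support.card :=
            Finset.card_erase_lt_of_mem hd
          omega
        have hsig' : sigmaMap F r s f' = f' := by
          rw [hf', map_sub, hsig, map_smul, sigmaMap_monomial, hsw]
        have hwt' : ∀ e ∈ f'.support, wt lam e = 1 := fun e he =>
          hwt e (Finset.mem_of_mem_erase (hsupp he))
        have hcc' : constantCoeff f' = 0 := by
          rw [hf', map_sub, hcc, MvPolynomial.smul_eq_C_mul, map_mul,
            constantCoeff_monomial_ne hd0, mul_zero, sub_zero]
        have hmem' := ih f' hcard' hsig' hwt' hcc'
        have hmemd : (cd • monomial d 1 : MvPolynomial (DVar r s) F)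
            ∈ Ideal.span (GSet F r s p lam) := by
          rw [MvPolynomial.smul_eq_C_mul]
          exact Ideal.mul_mem_left _ _ (symP hp hlam hsw hd0)
        have : f = f' + cd • monomial d 1 := by rw [hf']; ring
        rw [this]
        exact Ideal.add_mem _ hmem' hmemd
      · -- pair case
        set f' := f - cd • (monomial d 1 + monomial (sw d) 1) with hf'
        have hswd0 : sw d ≠ 0 := fun h => hd0 (sw_eq_zero_iff.mp h)
        have hcoeffswd : MvPolynomial.coeff (sw d) f = cd := by
          rw [hcd]
          exact sigma_coeff hsig d
        have hcoeff : ∀ e, MvPolynomial.coeff e f'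
            = MvPolynomial.coeff e f - ((if d = e then cd else 0) + (if sw d = e then cd else 0)) := by
          intro e
          rw [hf', MvPolynomial.coeff_sub, MvPolynomial.coeff_smul, MvPolynomial.coeff_add,
            MvPolynomial.coeff_monomial, MvPolynomial.coeff_monomial, smul_eq_mul]
          congr 1
          by_cases h1 : d = e <;> by_cases h2 : sw d = e <;>
            simp [h1, h2, mul_add]
        have hsupp : f'.support ⊆ f.support.erase d := by
          intro e he
          have h1 := MvPolynomial.mem_support_iff.mp he
          rw [hcoeff] at h1
          by_cases hde : d = e
          · subst hde
            rw [if_pos rfl, if_neg hsw] at h1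
            simp [hcd] at h1
          · by_cases hswe : sw d = e
            · subst hswe
              rw [if_neg hde, if_pos rfl, hcoeffswd] at h1
              simp at h1
            · rw [if_neg hde, if_neg hswe] at h1
              simp only [add_zero, sub_zero] at h1
              exact Finset.mem_erase.mpr ⟨Ne.symm hde, MvPolynomial.mem_support_iff.mpr h1⟩
        have hcard' : f'.support.card ≤ N := by
          have h1 := Finset.card_le_card hsupp
          have h2 : (f.support.erase d).card < f.support.card :=
            Finset.card_erase_lt_of_mem hd
          omega
        have hsig' : sigmaMap F r s f' = f' := by
          rw [hf', map_sub, hsig, map_smul, map_add, sigmaMap_monomial, sigmaMap_monomial,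
            sw_sw, add_comm ((monomial (sw d)) 1 : MvPolynomial (DVar r s) F)]
        have hwt' : ∀ e ∈ f'.support, wt lam e = 1 := fun e he =>
          hwt e (Finset.mem_of_mem_erase (hsupp he))
        have hcc' : constantCoeff f' = 0 := by
          rw [hf', map_sub, hcc, MvPolynomial.smul_eq_C_mul, map_mul, map_add,
            constantCoeff_monomial_ne hd0, constantCoeff_monomial_ne hswd0, add_zero,
            mul_zero, sub_zero]
        have hmem' := ih f' hcard' hsig' hwt' hcc'
        have hmemd : (cd • (monomial d 1 + monomial (sw d) 1) : MvPolynomial (DVar r s) F)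
            ∈ Ideal.span (GSet F r s p lam) := by
          rw [MvPolynomial.smul_eq_C_mul]
          exact Ideal.mul_mem_left _ _ (pairP hp hζ hlam (degE d) d le_rfl (hwt d hd))
        have : f = f' + cd • (monomial d 1 + monomial (sw d) 1) := by rw [hf']; ring
        rw [this]
        exact Ideal.add_mem _ hmem' hmemd

/-- Part 1: the Gröbner generators generate the Hilbert ideal -/
lemma span_eq_hilbert : Ideal.span (GSet F r s p lam) = HilbertIdeal F r s lam := by
  apply le_antisymm
  · rw [Ideal.span_le]
    exact gset_sub_hilbert hp hlam
  · rw [HilbertIdeal, Ideal.span_le]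
    rintro f ⟨hsig, hrho, hcc⟩
    exact invP hp hζ hlam f.support.card f le_rfl hsig (rho_fixed_wt hrho) hcc

end Part1b


section Glue

variable [CharP F 2] {mo : MonomialOrder (DVar r s)} {lam : Fin r → F} {p : ℕ}

/-- all oriented pair polynomials -/
def PPall (mo : MonomialOrder (DVar r s)) (lam : Fin r → F) (p : ℕ) :
    Set (MvPolynomial (DVar r s) F) :=
  {f | ∃ n a, PairA lam p a ∧ mo.toSyn (n + sw a) < mo.toSyn (n + a) ∧
    f = monomial (n + a) 1 + monomial (n + sw a) 1}

lemma Xe_mul_mem {g : MvPolynomial (DVar r s) F} (hg : g ∈ M23 lam p ∪ PPall mo lam p)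
    (e : DVar r s →₀ ℕ) : (monomial e 1) * g ∈ M23 lam p ∪ PPall mo lam p := by
  rcases hg with ⟨e', hD, rfl⟩ | ⟨n, a, hpa, ho, rfl⟩
  · left
    refine ⟨e + e', D23_mono le_add_self hD, ?_⟩
    rw [MvPolynomial.monomial_mul, one_mul]
  · right
    refine ⟨e + n, a, hpa, ?_, ?_⟩
    · simp only [map_add] at ho ⊢
      rw [add_assoc, add_assoc]
      exact add_lt_add_right ho _
    · rw [mul_add, MvPolynomial.monomial_mul, MvPolynomial.monomial_mul, one_mul,
        add_assoc, add_assoc]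

lemma mul_mem_V (q : MvPolynomial (DVar r s) F) {x : MvPolynomial (DVar r s) F}
    (hx : x ∈ Submodule.span F (M23 lam p ∪ PPall mo lam p)) :
    q * x ∈ Submodule.span F (M23 lam p ∪ PPall mo lam p) := by
  induction hx using Submodule.span_induction with
  | mem g hg =>
    have hq : q * g = ∑ d ∈ q.support, monomial d (MvPolynomial.coeff d q) * g := by
      conv_lhs => rw [q.as_sum]
      rw [Finset.sum_mul]
    rw [hq]
    apply Submodule.sum_mem
    intro d _
    have h1 : (monomial d (MvPolynomial.coeff d q)) * g
        = (MvPolynomial.coeff d q) • ((monomial d 1) * g) := by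
      rw [MvPolynomial.smul_eq_C_mul, ← mul_assoc, MvPolynomial.C_mul_monomial, mul_one]
    rw [h1]
    exact Submodule.smul_mem _ _ (Submodule.subset_span (Xe_mul_mem hg d))
  | zero => rw [mul_zero]; exact Submodule.zero_mem _
  | add x y _ _ ihx ihy => rw [mul_add]; exact Submodule.add_mem _ ihx ihy
  | smul c x _ ihx => rw [mul_smul_comm]; exact Submodule.smul_mem _ _ ihx

variable (hp : 0 < p) {ζ : F} (hζ : IsPrimitiveRoot ζ p) (hlam : ∀ i, lam i ^ p = 1)

include hp hlam

lemma pair_mem_V {c q : DVar r s →₀ ℕ} (hwc : wt lam c = 1) (hdc : degE c ≤ p) :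
    (monomial (q + c) 1 + monomial (q + sw c) 1 : MvPolynomial (DVar r s) F) ∈
      Submodule.span F (M23 lam p ∪ PPall mo lam p) := by
  by_cases hsw : sw c = c
  · rw [hsw, charTwo_add_self]
    exact Submodule.zero_mem _
  · have hne : mo.toSyn (q + sw c) ≠ mo.toSyn (q + c) := by
      intro h
      exact hsw (add_left_cancel (mo.toSyn.injective h))
    rcases lt_or_gt_of_ne hne with hlt | hlt
    · exact Submodule.subset_span (Or.inr ⟨q, c, ⟨hwc, hdc, hsw⟩, hlt, rfl⟩)
    · apply Submodule.subset_span
      right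
      refine ⟨q, sw c, ⟨wt_sw hp hlam c hwc, by rwa [degE_sw],
        fun h => hsw (by rw [sw_sw] at h; exact h.symm)⟩, by rwa [sw_sw], ?_⟩
      rw [sw_sw, add_comm ((monomial (q + c)) 1 : MvPolynomial (DVar r s) F)]

include hζ

lemma hilbert_le_V {f : MvPolynomial (DVar r s) F} (hf : f ∈ HilbertIdeal F r s lam) :
    f ∈ Submodule.span F (M23 lam p ∪ PPall mo lam p) := by
  rw [← span_eq_hilbert hp hζ hlam] at hf
  induction hf using Submodule.span_induction with
  | mem g hg =>
    rcases hg with (⟨m, ⟨d, rfl⟩, hrho, hsig, hdeg, rfl⟩ | ⟨m, v, ⟨d, rfl⟩, hrho, hdeg, hdvd, rfl⟩) | h3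
    · have hw : wt lam d = 1 := (rhoMap_fixed_iff d).mp hrho
      have hdp : degE d ≤ p := by rwa [totalDegree_monomial_one] at hdeg
      rw [sigmaMap_monomial]
      have := pair_mem_V (mo := mo) hp hlam hw hdp (q := 0)
      rwa [zero_add, zero_add] at this
    · have hw : wt lam d = 1 := (rhoMap_fixed_iff d).mp hrho
      have hdv : d v ≠ 0 := by
        rcases (MvPolynomial.X_dvd_monomial).mp hdvd with h | h
        · exact absurd h one_ne_zero
        · exact h
      rw [X_mul_monomial_one]
      apply Submodule.subset_span
      left
      refine ⟨single v 1 + d, ⟨single v 1 + d, Or.inl ⟨v, d, hw, ?_, ?_, rfl⟩, le_rfl⟩, rfl⟩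
      · rwa [totalDegree_monomial_one] at hdeg
      · exact Finsupp.mem_support_iff.mpr hdv
    · have hXX : ∀ v : DVar r s, (X v * X (dswap v) : MvPolynomial (DVar r s) F)
          ∈ Submodule.span F (M23 lam p ∪ PPall mo lam p) := by
        intro v
        rw [XX_eq]
        apply Submodule.subset_span
        left
        exact ⟨single v 1 + single (dswap v) 1,
          ⟨single v 1 + single (dswap v) 1, Or.inr ⟨v, rfl⟩, le_rfl⟩, rfl⟩
      rcases h3 with ⟨i, rfl⟩ | ⟨j, rfl⟩
      · exact hXX (Sum.inl (Sum.inl i))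
      · exact hXX (Sum.inr (Sum.inl j))
  | zero => exact Submodule.zero_mem _
  | add x y _ _ ihx ihy => exact Submodule.add_mem _ ihx ihy
  | smul c x _ ihx =>
    have : c • x = c * x := rfl
    rw [this]
    exact mul_mem_V c ihx

omit hp hζ hlam

lemma extractV {f : MvPolynomial (DVar r s) F}
    (hf : f ∈ Submodule.span F (M23 lam p ∪ PPall mo lam p)) :
    ∃ ν : mo.syn, f ∈ Submodule.span F (M23 lam p ∪ PPle mo lam p ν) := by
  classical
  obtain ⟨T, hTsub, hTmem⟩ := Submodule.mem_span_finite_of_mem_span hf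
  set T' := T.filter (fun g => g ∉ M23 lam p) with hT'
  have hT'P : ∀ g ∈ T', g ∈ PPall mo lam p := by
    intro g hg
    rw [hT', Finset.mem_filter] at hg
    rcases hTsub hg.1 with h | h
    · exact absurd h hg.2
    · exact h
  have hcover : (↑T : Set (MvPolynomial (DVar r s) F)) ⊆ M23 lam p ∪ ↑T' := by
    intro g hg
    by_cases hgM : g ∈ M23 lam p
    · exact Or.inl hgM
    · exact Or.inr (by rw [hT']; exact Finset.mem_coe.mpr (Finset.mem_filter.mpr ⟨hg, hgM⟩))
  have hf2 : f ∈ Submodule.span F (M23 lam p ∪ ↑T') := Submodule.span_mono hcover hTmem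
  set μ := T'.sup (fun g => g.support.sup mo.toSyn) with hμ
  refine ⟨μ, ?_⟩
  have hsub : (↑T' : Set (MvPolynomial (DVar r s) F)) ⊆ PPle mo lam p μ := by
    intro g hg
    obtain ⟨n, a, hpa, ho, hgeq⟩ := hT'P g (Finset.mem_coe.mp hg)
    refine ⟨n, a, hpa, ho, ?_, hgeq⟩
    have hmem : n + a ∈ g.support := by
      rw [hgeq]
      have hab : n + a ≠ n + sw a := fun h => absurd (h ▸ ho) (lt_irrefl _)
      rw [support_pair hab]
      exact Finset.mem_insert_self _ _
    calc mo.toSyn (n + a) ≤ g.support.sup mo.toSyn := Finset.le_sup hmem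
      _ ≤ μ := Finset.le_sup (f := fun g : MvPolynomial (DVar r s) F => g.support.sup mo.toSyn)
          (Finset.mem_coe.mp hg)
  exact Submodule.span_mono (Set.union_subset_union_right _ hsub) hf2

end Glue

end UGB

open UGB in
theorem GSet_isUniversalGroebnerBasis
    {F : Type*} [Field F] [CharP F 2] {r s p : ℕ} (hp : p.Prime) (hodd : Odd p)
    (ζ : F) (hζ : IsPrimitiveRoot ζ p)
    (lam : Fin r → F) (hlam : ∀ i, lam i ^ p = 1 ∧ lam i ≠ 1)
    (mo : MonomialOrder (DVar r s)) :
    Ideal.span (GSet F r s p lam) = HilbertIdeal F r s lam ∧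
    ∀ f ∈ HilbertIdeal F r s lam, f ≠ 0 →
      ∃ g ∈ GSet F r s p lam, g ≠ 0 ∧
        (monomial (lmExp mo g) 1 : MvPolynomial (DVar r s) F) ∣ monomial (lmExp mo f) 1 := by
  have hp0 : 0 < p := hp.pos
  have hlam' : ∀ i, lam i ^ p = 1 := fun i => (hlam i).1
  constructor
  · exact span_eq_hilbert hp0 hζ hlam'
  · intro f hfI hf0
    have hfV := hilbert_le_V (mo := mo) hp0 hζ hlam' hfI
    obtain ⟨ν, hfν⟩ := extractV hfV
    have hD := main_ind hp0 hζ hlam' le_rfl ν f hfν hf0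
    rcases hD with ⟨gexp, hgen, hge⟩ | ⟨a, hwa, hda, hsa, hor, hle⟩
    · rcases hgen with ⟨u, m, hwm, hdm, hum, rfl⟩ | ⟨v, rfl⟩
      · -- type (ii) generator
        refine ⟨X u * monomial m 1, ?_, ?_, ?_⟩
        · left; right
          exact ⟨monomial m 1, u, ⟨m, rfl⟩, (rhoMap_fixed_iff m).mpr hwm,
            by rw [totalDegree_monomial_one]; exact hdm,
            MvPolynomial.X_dvd_monomial.mpr (Or.inr (Finsupp.mem_support_iff.mp hum)), rfl⟩
        · rw [X_mul_monomial_one]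
          exact monomial_ne_zero' _
        · rw [X_mul_monomial_one, lmExp_monomial]
          exact monomial_dvd_of_le hge
      · -- type (iii) generator
        refine ⟨X v * X (dswap v), g3_mem v, ?_, ?_⟩
        · rw [XX_eq]
          exact monomial_ne_zero' _
        · rw [XX_eq, lmExp_monomial]
          exact monomial_dvd_of_le hge
    · -- pair generator
      refine ⟨monomial a 1 + monomial (sw a) 1, ?_, ?_, ?_⟩
      · left; left
        refine ⟨monomial a 1, ⟨a, rfl⟩, (rhoMap_fixed_iff a).mpr hwa,
          fun h => hsa ((sigmaMap_fixed_iff a).mp h),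
          by rw [totalDegree_monomial_one]; exact hda, ?_⟩
        rw [sigmaMap_monomial]
      · exact pair_ne_zero (fun h => hsa h.symm)
      · rw [lmExp_pair mo hor]
        exact monomial_dvd_of_le hle
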